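/- arXiv:1205.3710 — 2 statements merged into one kernel-verified Lean document; each statement's English description precedes it below -/
import Mathlib

section
/- For any matrices A, B, the symmetric (Strang) splitting satisfies [exp(A/(2N))·exp(B/N)·exp(A/(2N))]^N = exp(A + B + E_N) with |E_N| = O(1/N²); equivalently, the symmetric product converges to exp(A+B) with error O(1/N²). -/
attribute [local instance] Matrix.linftyOpNormedRing Matrix.linftyOpNormedAlgebra

set_option linter.unusedSectionVars false
set_option maxHeartbeats 1000000

open NormedSpace in
private theorem my_norm_exp_le {𝔸 : Type*} [NormedRing 𝔸] [NormedAlgebra ℂ 𝔸] [CompleteSpace 𝔸]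
    [NormOneClass 𝔸] (x : 𝔸) : ‖exp x‖ ≤ Real.exp ‖x‖ := by
  rw [exp_eq_tsum ℂ]
  have hs : Summable fun n : ℕ => ‖((n.factorial : ℂ))⁻¹ • x ^ n‖ := norm_expSeries_summable' x
  have hg : Summable fun n : ℕ => ‖x‖ ^ n / n.factorial := Real.summable_pow_div_factorial ‖x‖
  calc ‖∑' n : ℕ, ((n.factorial : ℂ))⁻¹ • x ^ n‖ ≤ ∑' n : ℕ, ‖((n.factorial : ℂ))⁻¹ • x ^ n‖ :=
        norm_tsum_le_tsum_norm hs
    _ ≤ ∑' n : ℕ, ‖x‖ ^ n / n.factorial := by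
        refine Summable.tsum_le_tsum (fun n => ?_) hs hg
        rw [norm_smul, norm_inv, Complex.norm_natCast, div_eq_inv_mul]
        gcongr
        exact norm_pow_le x n
    _ = Real.exp ‖x‖ := by
        rw [Real.exp_eq_exp_ℝ, exp_eq_tsum ℝ]
        congr 1; ext n; rw [smul_eq_mul]; ring

open NormedSpace in
private theorem my_exp_taylor {𝔸 : Type*} [NormedRing 𝔸] [NormedAlgebra ℂ 𝔸] [CompleteSpace 𝔸]
    [NormOneClass 𝔸] (x : 𝔸) (hx : ‖x‖ ≤ 1) :
    ‖exp x - (1 + x + (2 : ℂ)⁻¹ • (x * x))‖ ≤ ‖x‖ ^ 3 := by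
  have hs : Summable fun n : ℕ => ((n.factorial : ℂ))⁻¹ • x ^ n :=
    expSeries_summable' x
  have hsplit := Summable.sum_add_tsum_nat_add (f := fun n : ℕ => ((n.factorial : ℂ))⁻¹ • x ^ n) 3 hs
  beta_reduce at hsplit
  have hsum3 : ∑ i ∈ Finset.range 3, ((i.factorial : ℂ))⁻¹ • x ^ i
      = 1 + x + (2 : ℂ)⁻¹ • (x * x) := by
    simp [Finset.sum_range_succ, Nat.factorial, pow_succ]
  have hrem : exp x - (1 + x + (2 : ℂ)⁻¹ • (x * x))
      = ∑' n : ℕ, (((n + 3).factorial : ℂ))⁻¹ • x ^ (n + 3) := by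
    rw [exp_eq_tsum ℂ]; beta_reduce; rw [← hsplit, hsum3]; abel
  rw [hrem]
  have hs2 : Summable fun n : ℕ => ‖(((n + 3).factorial : ℂ))⁻¹ • x ^ (n + 3)‖ :=
    ((norm_expSeries_summable' x).comp_injective (add_left_injective 3))
  have hg : Summable fun n : ℕ => ‖x‖ ^ 3 / 6 * (‖x‖ ^ n / n.factorial) :=
    (Real.summable_pow_div_factorial ‖x‖).mul_left _
  have hbound : ∀ n : ℕ, ‖(((n + 3).factorial : ℂ))⁻¹ • x ^ (n + 3)‖
      ≤ ‖x‖ ^ 3 / 6 * (‖x‖ ^ n / n.factorial) := by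
    intro n
    rw [norm_smul, norm_inv, Complex.norm_natCast]
    have h1 : ‖x ^ (n + 3)‖ ≤ ‖x‖ ^ 3 * ‖x‖ ^ n := by
      calc ‖x ^ (n + 3)‖ ≤ ‖x‖ ^ (n + 3) := norm_pow_le x _
        _ = ‖x‖ ^ 3 * ‖x‖ ^ n := by ring
    have h6 : (6 : ℝ) * n.factorial ≤ ((n + 3).factorial : ℝ) := by
      have := Nat.le_of_dvd (Nat.factorial_pos _)
        (Nat.factorial_mul_factorial_dvd_factorial_add 3 n)
      have h' : 6 * n.factorial ≤ (3 + n).factorial := by simpa [Nat.factorial] using this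
      rw [show n + 3 = 3 + n by ring]
      exact_mod_cast h'
    have h2 : (((n + 3).factorial : ℝ))⁻¹ ≤ (6 * (n.factorial : ℝ))⁻¹ := by
      apply inv_anti₀ (by positivity) h6
    calc (((n + 3).factorial : ℝ))⁻¹ * ‖x ^ (n + 3)‖
        ≤ (6 * (n.factorial : ℝ))⁻¹ * (‖x‖ ^ 3 * ‖x‖ ^ n) :=
          mul_le_mul h2 h1 (norm_nonneg _) (by positivity)
      _ = ‖x‖ ^ 3 / 6 * (‖x‖ ^ n / n.factorial) := by
          rw [mul_inv]; ring
  calc ‖∑' n : ℕ, (((n + 3).factorial : ℂ))⁻¹ • x ^ (n + 3)‖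
      ≤ ∑' n : ℕ, ‖x‖ ^ 3 / 6 * (‖x‖ ^ n / n.factorial) :=
        (norm_tsum_le_tsum_norm hs2).trans (Summable.tsum_le_tsum hbound hs2 hg)
    _ = ‖x‖ ^ 3 / 6 * Real.exp ‖x‖ := by
        rw [tsum_mul_left]
        congr 1
        rw [Real.exp_eq_exp_ℝ, exp_eq_tsum ℝ]
        congr 1; ext n; rw [smul_eq_mul]; ring
    _ ≤ ‖x‖ ^ 3 / 6 * Real.exp 1 := by gcongr
    _ ≤ ‖x‖ ^ 3 := by
        nlinarith [Real.exp_one_lt_d9, pow_nonneg (norm_nonneg x) 3]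

section aux
variable {𝔸 : Type*} [NormedRing 𝔸] [NormedAlgebra ℂ 𝔸] [CompleteSpace 𝔸] [NormOneClass 𝔸]

theorem poly_id (a b : 𝔸) :
    (2 + 2*a + a*a) * (2 + 2*b + b*b) * (2 + 2*a + a*a)
      - (8 + 16*a + 8*b + 4*((2*a+b)*(2*a+b)))
    = 4•(a*b*b) + (4•(a*a*b) + (2•(a*a*b*b) + (4•(b*b*a) + (8•(a*b*a)
      + (4•(a*b*b*a) + (8•(a*a*a) + (4•(a*a*b*a) + (2•(a*a*b*b*a) + (4•(b*a*a)
      + (2•(b*b*a*a) + (4•(a*b*a*a) + (2•(a*b*b*a*a) + (2•(a*a*a*a)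
      + (2•(a*a*b*a*a) + a*a*b*b*a*a)))))))))))))) := by
  have h8 : (8 : 𝔸) = 4 • (2 : 𝔸) := by norm_num
  rw [h8]
  noncomm_ring

theorem conv_nat (n : ℕ) (x : 𝔸) : (n : ℂ) • x = (n : 𝔸) * x := by
  rw [Nat.cast_smul_eq_nsmul, nsmul_eq_mul]

theorem conv_two (x : 𝔸) : (2 : ℂ) • x = 2 * x := by
  have := conv_nat 2 x; push_cast at this; exact this

theorem conv_eight (x : 𝔸) : (8 : ℂ) • x = 8 * x := by
  have := conv_nat 8 x; push_cast at this; exact this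

theorem conv_four (x : 𝔸) : (4 : ℂ) • x = 4 * x := by
  have := conv_nat 4 x; push_cast at this; exact this

theorem normP_le {x : 𝔸} (hx : ‖x‖ ≤ 1) : ‖1 + x + (2:ℂ)⁻¹ • (x * x)‖ ≤ 3 := by
  have h1 : ‖(2:ℂ)⁻¹ • (x * x)‖ ≤ 2⁻¹ * (‖x‖ * ‖x‖) := by
    rw [norm_smul, norm_inv]
    have : ‖(2:ℂ)‖ = 2 := by simp
    rw [this]
    gcongr
    exact norm_mul_le x x
  calc ‖1 + x + (2:ℂ)⁻¹ • (x * x)‖ ≤ ‖(1:𝔸) + x‖ + ‖(2:ℂ)⁻¹ • (x * x)‖ := norm_add_le _ _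
    _ ≤ (‖(1:𝔸)‖ + ‖x‖) + 2⁻¹ * (‖x‖ * ‖x‖) := add_le_add (norm_add_le _ _) h1
    _ ≤ (1 + 1) + 2⁻¹ * (1 * 1) := by rw [norm_one]; gcongr
    _ ≤ 3 := by norm_num

theorem h2P (x : 𝔸) : (2:ℂ) • (1 + x + (2:ℂ)⁻¹ • (x*x)) = 2 + 2*x + x*x := by
  rw [smul_add, smul_add, conv_two, conv_two, smul_smul,
    mul_inv_cancel₀ (two_ne_zero), one_smul, mul_one]

open NormedSpace in
theorem key_est (a b : 𝔸) {r : ℝ} (ha : ‖a‖ ≤ r) (hb : ‖b‖ ≤ r)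
    (hr : r ≤ 3⁻¹) (hr0 : 0 ≤ r)
    (htaylor : ∀ x : 𝔸, ‖x‖ ≤ 1 → ‖exp x - (1 + x + (2 : ℂ)⁻¹ • (x * x))‖ ≤ ‖x‖ ^ 3)
    (hexpnorm : ∀ x : 𝔸, ‖exp x‖ ≤ Real.exp ‖x‖) :
    ‖exp a * exp b * exp a - exp ((2:ℂ) • a + b)‖ ≤ 100 * r ^ 3 := by
  set c : 𝔸 := (2:ℂ) • a + b with hcdef
  set Pa : 𝔸 := 1 + a + (2:ℂ)⁻¹ • (a*a) with hPadef
  set Pb : 𝔸 := 1 + b + (2:ℂ)⁻¹ • (b*b) with hPbdef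
  set Pc : 𝔸 := 1 + c + (2:ℂ)⁻¹ • (c*c) with hPcdef
  set ea : 𝔸 := exp a with headef
  set eb : 𝔸 := exp b with hebdef
  have hr1 : r ≤ 1 := by linarith
  have ha1 : ‖a‖ ≤ 1 := ha.trans hr1
  have hb1 : ‖b‖ ≤ 1 := hb.trans hr1
  have hc3 : ‖c‖ ≤ 3 * r := by
    calc ‖c‖ ≤ ‖(2:ℂ) • a‖ + ‖b‖ := norm_add_le _ _
      _ = 2 * ‖a‖ + ‖b‖ := by rw [norm_smul]; norm_num
      _ ≤ 2 * r + r := by gcongr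
      _ = 3 * r := by ring
  have hc1 : ‖c‖ ≤ 1 := by nlinarith
  have h0r3 : (0:ℝ) ≤ r^3 := by positivity
  -- remainder bounds
  have hRa : ‖ea - Pa‖ ≤ r^3 := (htaylor a ha1).trans (by gcongr)
  have hRb : ‖eb - Pb‖ ≤ r^3 := (htaylor b hb1).trans (by gcongr)
  have hRc : ‖exp c - Pc‖ ≤ 27 * r^3 := by
    refine (htaylor c hc1).trans ?_
    calc ‖c‖^3 ≤ (3*r)^3 := by gcongr
      _ = 27 * r^3 := by ring
  have hea : ‖ea‖ ≤ 3 := by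
    refine (hexpnorm a).trans ?_
    have := Real.exp_le_exp.2 ha1
    have h3 := Real.exp_one_lt_d9
    linarith
  have heb : ‖eb‖ ≤ 3 := by
    refine (hexpnorm b).trans ?_
    have := Real.exp_le_exp.2 hb1
    have h3 := Real.exp_one_lt_d9
    linarith
  have hPa : ‖Pa‖ ≤ 3 := normP_le ha1
  have hPb : ‖Pb‖ ≤ 3 := normP_le hb1
  -- generic multiplication bound
  have hM : ∀ {x y : 𝔸} {p q : ℝ}, ‖x‖ ≤ p → ‖y‖ ≤ q → 0 ≤ p → ‖x * y‖ ≤ p * q :=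
    fun hx hy hp => (norm_mul_le _ _).trans (mul_le_mul hx hy (norm_nonneg _) hp)
  -- T1
  have hT1eq : ea * eb * ea - Pa * Pb * Pa
      = (ea - Pa)*(eb*ea) + (Pa*((eb - Pb)*ea) + Pa*Pb*(ea - Pa)) := by noncomm_ring
  have hT1 : ‖ea * eb * ea - Pa * Pb * Pa‖ ≤ 27 * r^3 := by
    rw [hT1eq]
    have b1 : ‖(ea - Pa)*(eb*ea)‖ ≤ r^3 * (3*3) := hM hRa (hM heb hea (by norm_num)) h0r3
    have b2 : ‖Pa*((eb - Pb)*ea)‖ ≤ 3 * (r^3 * 3) := hM hPa (hM hRb hea h0r3) (by norm_num)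
    have b3 : ‖Pa*Pb*(ea - Pa)‖ ≤ 3 * 3 * r^3 := hM (hM hPa hPb (by norm_num)) hRa (by norm_num)
    calc ‖_ + (_ + _)‖ ≤ ‖(ea - Pa)*(eb*ea)‖ + (‖Pa*((eb - Pb)*ea)‖ + ‖Pa*Pb*(ea - Pa)‖) :=
          (norm_add_le _ _).trans (by gcongr; exact norm_add_le _ _)
      _ ≤ r^3 * (3*3) + (3 * (r^3 * 3) + 3 * 3 * r^3) := by gcongr
      _ = 27 * r^3 := by ring
  -- T2
  set D : 𝔸 := 4•(a*b*b) + (4•(a*a*b) + (2•(a*a*b*b) + (4•(b*b*a) + (8•(a*b*a)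
      + (4•(a*b*b*a) + (8•(a*a*a) + (4•(a*a*b*a) + (2•(a*a*b*b*a) + (4•(b*a*a)
      + (2•(b*b*a*a) + (4•(a*b*a*a) + (2•(a*b*b*a*a) + (2•(a*a*a*a)
      + (2•(a*a*b*a*a) + a*a*b*b*a*a)))))))))))))) with hDdef
  have h8c : (8:ℂ) • Pc = 8 + 16*a + 8*b + 4*((2*a+b)*(2*a+b)) := by
    have e1 : (8:ℂ) • ((2:ℂ)⁻¹ • (c*c)) = 4*(c*c) := by
      rw [smul_smul, show (8:ℂ) * 2⁻¹ = 4 by norm_num, conv_four]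
    rw [hPcdef, smul_add, smul_add, e1, conv_eight, conv_eight, hcdef, conv_two,
      show (8:𝔸) = 8•(1:𝔸) by norm_num]
    noncomm_ring
  have hTT : (8:ℂ) • (Pa * Pb * Pa - Pc) = D := by
    have e1 : (8:ℂ) • (Pa*Pb*Pa) = ((2:ℂ)•Pa) * ((2:ℂ)•Pb) * ((2:ℂ)•Pa) := by
      simp only [smul_mul_assoc, mul_smul_comm, smul_smul]
      norm_num
    rw [smul_sub, e1, hPadef, hPbdef, h2P, h2P, h8c, hDdef]
    exact poly_id a b
  have hPP : Pa * Pb * Pa - Pc = (8:ℂ)⁻¹ • D :=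
    ((inv_smul_eq_iff₀ (by norm_num : (8:ℂ) ≠ 0)).2 hTT.symm).symm
  -- bound on D
  have hm3 : ∀ x y z : 𝔸, ‖x‖ ≤ r → ‖y‖ ≤ r → ‖z‖ ≤ r → ‖x*y*z‖ ≤ r^3 := by
    intro x y z hx hy hz
    calc ‖x*y*z‖ ≤ r * r * r := hM (hM hx hy hr0) hz (by positivity)
      _ = r^3 := by ring
  have hext : ∀ (m x : 𝔸), ‖m‖ ≤ r^3 → ‖x‖ ≤ r → ‖m*x‖ ≤ r^3 := by
    intro m x hm hx
    calc ‖m*x‖ ≤ r^3 * r := hM hm hx h0r3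
      _ ≤ r^3 * 1 := by gcongr
      _ = r^3 := mul_one _
  have hco : ∀ (n : ℕ) (x : 𝔸), ‖x‖ ≤ r^3 → ‖n • x‖ ≤ (n:ℝ) * r^3 := by
    intro n x hx
    refine (norm_nsmul_le (n := n) (a := x)).trans ?_
    gcongr
  have habb : ‖a*b*b‖ ≤ r^3 := hm3 a b b ha hb hb
  have haab : ‖a*a*b‖ ≤ r^3 := hm3 a a b ha ha hb
  have haabb : ‖a*a*b*b‖ ≤ r^3 := hext _ b haab hb
  have hbba : ‖b*b*a‖ ≤ r^3 := hm3 b b a hb hb ha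
  have haba : ‖a*b*a‖ ≤ r^3 := hm3 a b a ha hb ha
  have habba : ‖a*b*b*a‖ ≤ r^3 := hext _ a habb ha
  have haaa : ‖a*a*a‖ ≤ r^3 := hm3 a a a ha ha ha
  have haaba : ‖a*a*b*a‖ ≤ r^3 := hext _ a haab ha
  have haabba : ‖a*a*b*b*a‖ ≤ r^3 := hext _ a haabb ha
  have hbaa : ‖b*a*a‖ ≤ r^3 := hm3 b a a hb ha ha
  have hbbaa : ‖b*b*a*a‖ ≤ r^3 := hext _ a hbba ha
  have habaa : ‖a*b*a*a‖ ≤ r^3 := hext _ a haba ha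
  have habbaa : ‖a*b*b*a*a‖ ≤ r^3 := hext _ a habba ha
  have haaaa : ‖a*a*a*a‖ ≤ r^3 := hext _ a haaa ha
  have haabaa : ‖a*a*b*a*a‖ ≤ r^3 := hext _ a haaba ha
  have haabbaa : ‖a*a*b*b*a*a‖ ≤ r^3 := hext _ a haabba ha
  have step : ∀ (u v : 𝔸) (p q : ℝ), ‖u‖ ≤ p → ‖v‖ ≤ q → ‖u + v‖ ≤ p + q :=
    fun u v p q hu hv => (norm_add_le u v).trans (add_le_add hu hv)
  have hD : ‖D‖ ≤ 57 * r^3 := by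
    rw [hDdef]
    have := step _ _ _ _ (hco 4 _ habb) (step _ _ _ _ (hco 4 _ haab) (step _ _ _ _
      (hco 2 _ haabb) (step _ _ _ _ (hco 4 _ hbba) (step _ _ _ _ (hco 8 _ haba)
      (step _ _ _ _ (hco 4 _ habba) (step _ _ _ _ (hco 8 _ haaa) (step _ _ _ _
      (hco 4 _ haaba) (step _ _ _ _ (hco 2 _ haabba) (step _ _ _ _ (hco 4 _ hbaa)
      (step _ _ _ _ (hco 2 _ hbbaa) (step _ _ _ _ (hco 4 _ habaa) (step _ _ _ _
      (hco 2 _ habbaa) (step _ _ _ _ (hco 2 _ haaaa) (step _ _ _ _ (hco 2 _ haabaa)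
      haabbaa))))))))))))))
    refine this.trans ?_
    push_cast
    linarith
  have hT2 : ‖Pa * Pb * Pa - Pc‖ ≤ 8 * r^3 := by
    rw [hPP, norm_smul, norm_inv]
    have h8n : ‖(8:ℂ)‖ = 8 := by simp
    rw [h8n]
    calc (8:ℝ)⁻¹ * ‖D‖ ≤ 8⁻¹ * (57 * r^3) := by gcongr
      _ ≤ 8 * r^3 := by nlinarith
  -- assemble
  have hdecomp : ea * eb * ea - exp c
      = (ea * eb * ea - Pa*Pb*Pa) + ((Pa*Pb*Pa - Pc) + (Pc - exp c)) := by abel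
  calc ‖ea * eb * ea - exp c‖
      ≤ ‖ea * eb * ea - Pa*Pb*Pa‖ + (‖Pa*Pb*Pa - Pc‖ + ‖Pc - exp c‖) := by
        rw [hdecomp]
        exact (norm_add_le _ _).trans (by gcongr; exact norm_add_le _ _)
    _ ≤ 27 * r^3 + (8 * r^3 + 27 * r^3) := by
        refine add_le_add hT1 (add_le_add hT2 ?_)
        rw [norm_sub_rev]
        exact hRc
    _ ≤ 100 * r^3 := by nlinarith
end aux

open Filter Asymptotics in
/-- Symmetric (Strang) splitting: for all large `N`,
`(exp(A/(2N)) exp(B/N) exp(A/(2N)))^N = exp(A + B + E_N)` with `‖E_N‖ = O(1/N²)`. -/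
theorem strang_splitting (d : ℕ) (A B : Matrix (Fin d) (Fin d) ℂ) :
    ∃ E : ℕ → Matrix (Fin d) (Fin d) ℂ,
      (∀ᶠ N : ℕ in atTop,
        (NormedSpace.exp ((2 * (N : ℂ))⁻¹ • A) * NormedSpace.exp ((N : ℂ)⁻¹ • B) *
            NormedSpace.exp ((2 * (N : ℂ))⁻¹ • A)) ^ N
          = NormedSpace.exp (A + B + E N)) ∧
      (fun N : ℕ => ‖E N‖) =O[atTop] fun N : ℕ => 1 / (N : ℝ) ^ 2 := by
  rcases Nat.eq_zero_or_pos d with hd | hd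
  · subst hd
    refine ⟨fun _ => 0, Eventually.of_forall fun N => Subsingleton.elim _ _, ?_⟩
    simp only [norm_zero]
    exact (isBigO_zero _ _).congr_left fun _ => rfl
  · haveI : Nonempty (Fin d) := ⟨⟨0, hd⟩⟩
    have hstrict : HasStrictFDerivAt (NormedSpace.exp)
        ((ContinuousLinearEquiv.refl ℂ (Matrix (Fin d) (Fin d) ℂ)) :
          Matrix (Fin d) (Fin d) ℂ →L[ℂ] Matrix (Fin d) (Fin d) ℂ) 0 := by
      have h := hasStrictFDerivAt_exp_zero (𝕂 := ℂ) (𝔸 := Matrix (Fin d) (Fin d) ℂ)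
      exact h
    set g : Matrix (Fin d) (Fin d) ℂ → Matrix (Fin d) (Fin d) ℂ :=
      hstrict.localInverse _ _ _ with hg
    have hleft : ∀ᶠ x in nhds (0 : Matrix (Fin d) (Fin d) ℂ), g (NormedSpace.exp x) = x :=
      hstrict.eventually_left_inverse
    have hright : ∀ᶠ y in nhds (NormedSpace.exp (0 : Matrix (Fin d) (Fin d) ℂ)),
        NormedSpace.exp (g y) = y :=
      hstrict.eventually_right_inverse
    have hginv := hstrict.to_localInverse
    obtain ⟨K, s, hs, hlip⟩ := hginv.exists_lipschitzOnWith
    -- sequences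
    set aN : ℕ → Matrix (Fin d) (Fin d) ℂ := fun N => (2 * (N : ℂ))⁻¹ • A with haN
    set bN : ℕ → Matrix (Fin d) (Fin d) ℂ := fun N => ((N : ℂ))⁻¹ • B with hbN
    set cN : ℕ → Matrix (Fin d) (Fin d) ℂ := fun N => ((N : ℂ))⁻¹ • (A + B) with hcN
    set Q : ℕ → Matrix (Fin d) (Fin d) ℂ := fun N =>
      NormedSpace.exp (aN N) * NormedSpace.exp (bN N) * NormedSpace.exp (aN N) with hQ
    set K0 : ℝ := ‖A‖ + ‖B‖ + 1 with hK0
    have hK0pos : (0:ℝ) < K0 := by positivity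
    have hBnn : (0:ℝ) ≤ ‖B‖ := norm_nonneg _
    have hAnn : (0:ℝ) ≤ ‖A‖ := norm_nonneg _
    -- norm bounds
    have hna : ∀ N : ℕ, ‖aN N‖ ≤ ‖A‖ * ((N:ℝ))⁻¹ := by
      intro N
      have hinv : ‖(2 * (N:ℂ))⁻¹‖ ≤ ((N:ℝ))⁻¹ := by
        rw [norm_inv, norm_mul, Complex.norm_natCast]
        have h2 : ‖(2:ℂ)‖ = 2 := by simp
        rw [h2, mul_inv]
        have hNn : (0:ℝ) ≤ ((N:ℝ))⁻¹ := by positivity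
        nlinarith
      calc ‖aN N‖ = ‖(2 * (N:ℂ))⁻¹‖ * ‖A‖ := norm_smul _ _
        _ ≤ ((N:ℝ))⁻¹ * ‖A‖ := by gcongr
        _ = ‖A‖ * ((N:ℝ))⁻¹ := mul_comm _ _
    have hnb : ∀ N : ℕ, ‖bN N‖ ≤ ‖B‖ * ((N:ℝ))⁻¹ := fun N =>
      le_of_eq (by rw [show bN N = ((N:ℂ))⁻¹ • B from rfl, norm_smul, norm_inv,
        Complex.norm_natCast, mul_comm])
    have hnc : ∀ N : ℕ, ‖cN N‖ ≤ ‖A + B‖ * ((N:ℝ))⁻¹ := fun N =>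
      le_of_eq (by rw [show cN N = ((N:ℂ))⁻¹ • (A + B) from rfl, norm_smul, norm_inv,
        Complex.norm_natCast, mul_comm])
    -- tendsto
    have htendinv := tendsto_inv_atTop_nhds_zero_nat (𝕜 := ℝ)
    have hta : Tendsto aN atTop (nhds 0) :=
      squeeze_zero_norm hna (by simpa using htendinv.const_mul ‖A‖)
    have htb : Tendsto bN atTop (nhds 0) :=
      squeeze_zero_norm hnb (by simpa using htendinv.const_mul ‖B‖)
    have htc : Tendsto cN atTop (nhds 0) :=
      squeeze_zero_norm hnc (by simpa using htendinv.const_mul ‖A + B‖)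
    have hec := (NormedSpace.exp_continuous (𝔸 := Matrix (Fin d) (Fin d) ℂ)).tendsto 0
    have htQ : Tendsto Q atTop (nhds 1) := by
      have h := ((hec.comp hta).mul (hec.comp htb)).mul (hec.comp hta)
      simp [NormedSpace.exp_zero] at h; exact h
    -- eventual facts
    have F1 : ∀ᶠ N in atTop, NormedSpace.exp (g (Q N)) = Q N :=
      htQ.eventually (by rwa [NormedSpace.exp_zero] at hright)
    have F2 : ∀ᶠ N in atTop, g (NormedSpace.exp (cN N)) = cN N := htc.eventually hleft
    have F3 : ∀ᶠ N in atTop, Q N ∈ s :=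
      htQ.eventually_mem (by rwa [NormedSpace.exp_zero] at hs)
    have F4 : ∀ᶠ N in atTop, NormedSpace.exp (cN N) ∈ s := (hec.comp htc).eventually_mem hs
    have F5 : ∀ᶠ N : ℕ in atTop, (1:ℕ) ≤ N := eventually_ge_atTop 1
    have F6 : ∀ᶠ N : ℕ in atTop, 3 * K0 ≤ (N:ℝ) :=
      tendsto_natCast_atTop_atTop.eventually_ge_atTop (3*K0)
    have main : ∀ᶠ N in atTop,
        (Q N ^ N = NormedSpace.exp (A + B + ((N:ℂ) • g (Q N) - (A + B))) ∧
          ‖(N:ℂ) • g (Q N) - (A + B)‖ ≤ (100 * (K:ℝ) * K0^3) * (1 / (N:ℝ)^2)) := by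
      filter_upwards [F1, F2, F3, F4, F5, F6] with N f1 f2 f3 f4 f5 f6
      have hNpos : (0:ℝ) < (N:ℝ) := by exact_mod_cast Nat.pos_of_ne_zero (by omega)
      have hNC : ((N:ℂ)) ≠ 0 := Nat.cast_ne_zero.2 (by omega)
      have hNinv : (0:ℝ) ≤ ((N:ℝ))⁻¹ := by positivity
      set r : ℝ := K0 * ((N:ℝ))⁻¹ with hrdef
      have hr0 : (0:ℝ) ≤ r := by positivity
      have hrle : r ≤ 3⁻¹ := by
        rw [hrdef, ← div_eq_mul_inv, div_le_iff₀ hNpos]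
        linarith
      have haR : ‖aN N‖ ≤ r := (hna N).trans (by rw [hrdef]; gcongr; linarith)
      have hbR : ‖bN N‖ ≤ r := (hnb N).trans (by rw [hrdef]; gcongr; linarith)
      have hcid : (2:ℂ) • aN N + bN N = cN N := by
        simp only [haN, hbN, hcN]
        rw [smul_smul, smul_add]
        have h2 : (2:ℂ) * (2 * (N:ℂ))⁻¹ = ((N:ℂ))⁻¹ := by
          field_simp
        rw [h2]
      have hkey : ‖Q N - NormedSpace.exp (cN N)‖ ≤ 100 * r^3 := by
        have h := key_est (aN N) (bN N) haR hbR hrle hr0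
          (fun x hx => my_exp_taylor x hx) (fun x => my_norm_exp_le x)
        rw [hcid] at h
        exact h
      have heq2 : A + B + ((N:ℂ) • g (Q N) - (A + B)) = (N:ℂ) • g (Q N) := by abel
      constructor
      · rw [heq2, Nat.cast_smul_eq_nsmul ℂ N]
        have := NormedSpace.exp_nsmul N (g (Q N)); exact (congrArg (· ^ N) f1.symm).trans this.symm
      · have hNsmulc : (N:ℂ) • cN N = A + B := by
          simp only [hcN]
          rw [smul_smul, mul_inv_cancel₀ hNC, one_smul]
        have hEd : (N:ℂ) • g (Q N) - (A + B)
            = (N:ℂ) • (g (Q N) - g (NormedSpace.exp (cN N))) := by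
          rw [smul_sub, f2, hNsmulc]
        have hlipN : ‖g (Q N) - g (NormedSpace.exp (cN N))‖
            ≤ (K:ℝ) * ‖Q N - NormedSpace.exp (cN N)‖ := by
          have h := hlip.dist_le_mul _ f3 _ f4
          rwa [dist_eq_norm, dist_eq_norm] at h
        calc ‖(N:ℂ) • g (Q N) - (A + B)‖
            = (N:ℝ) * ‖g (Q N) - g (NormedSpace.exp (cN N))‖ := by
              rw [hEd, norm_smul, Complex.norm_natCast]
          _ ≤ (N:ℝ) * ((K:ℝ) * (100 * r^3)) := by
              refine mul_le_mul_of_nonneg_left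
                (hlipN.trans (mul_le_mul_of_nonneg_left hkey K.2)) (le_of_lt hNpos)
          _ = (100 * (K:ℝ) * K0^3) * (1 / (N:ℝ)^2) := by
              rw [hrdef]
              field_simp
    refine ⟨fun N => (N:ℂ) • g (Q N) - (A + B), main.mono fun N h => h.1, ?_⟩
    rw [isBigO_iff]
    refine ⟨100 * (K:ℝ) * K0^3, ?_⟩
    filter_upwards [main] with N h
    rw [Real.norm_of_nonneg (norm_nonneg _), Real.norm_of_nonneg (by positivity)]
    exact h.2
end

section
/- Write exp(ε·X)·exp(t·Y)·exp(ε·X) in the quaternions with X = i, Y = i·cos(α)+j·sin(α) as a + bX + cY + dZ where Z = sin(α)·k. Then d = 0, a = cos(2ε)cos(t) - cos(α)sin(2ε)sin(t), b = sin(2ε)cos(t) - 2cos(α)sin²(ε)sin(t), and c = sin(t). -/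
open scoped Quaternion

def qi : ℍ[ℝ] := ⟨0, 1, 0, 0⟩
def qj : ℍ[ℝ] := ⟨0, 0, 1, 0⟩
def qk : ℍ[ℝ] := ⟨0, 0, 0, 1⟩

@[simp] lemma qi_re : qi.re = 0 := rfl
@[simp] lemma qi_imI : qi.imI = 1 := rfl
@[simp] lemma qi_imJ : qi.imJ = 0 := rfl
@[simp] lemma qi_imK : qi.imK = 0 := rfl
@[simp] lemma qj_re : qj.re = 0 := rfl
@[simp] lemma qj_imI : qj.imI = 0 := rfl
@[simp] lemma qj_imJ : qj.imJ = 1 := rfl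
@[simp] lemma qj_imK : qj.imK = 0 := rfl
@[simp] lemma qk_re : qk.re = 0 := rfl
@[simp] lemma qk_imI : qk.imI = 0 := rfl
@[simp] lemma qk_imJ : qk.imJ = 0 := rfl
@[simp] lemma qk_imK : qk.imK = 1 := rfl
lemma exp_smul_unit (r : ℝ) (u : ℍ[ℝ]) (hu : u.re = 0) (hn : ‖u‖ = 1) :
    NormedSpace.exp (r • u) = ((Real.cos r : ℝ) : ℍ[ℝ]) + Real.sin r • u := by
  rw [Quaternion.exp_of_re_eq_zero (r • u) (by simp [hu])]
  rw [norm_smul, hn, mul_one, Real.norm_eq_abs, Real.cos_abs]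
  congr 1
  rw [smul_smul]
  congr 1
  rcases eq_or_ne r 0 with h | h
  · simp [h]
  · rcases le_or_gt 0 r with h2 | h2
    · rw [abs_of_nonneg h2]; field_simp
    · rw [abs_of_neg h2, Real.sin_neg]; field_simp

/-- Writing `exp(ε X) exp(t Y) exp(ε X) = a + b X + c Y + d Z` in the basis
`{1, X, Y, Z}` (with `X = i`, `Y = i cos α + j sin α`, `Z = sin α • k`), one has
`d = 0`, `a = cos 2ε cos t - cos α sin 2ε sin t`,
`b = sin 2ε cos t - 2 cos α sin² ε sin t`, `c = sin t`. -/
theorem exp_eX_exp_tY_exp_eX (α : ℝ) (h0 : 0 < α) (hπ : α < Real.pi) (ε t : ℝ) :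
    let X : ℍ[ℝ] := qi
    let Y : ℍ[ℝ] := Real.cos α • qi + Real.sin α • qj
    let Z : ℍ[ℝ] := Real.sin α • qk
    NormedSpace.exp (ε • X) * NormedSpace.exp (t • Y) * NormedSpace.exp (ε • X)
      = ((Real.cos (2 * ε) * Real.cos t - Real.cos α * Real.sin (2 * ε) * Real.sin t : ℝ)
          : ℍ[ℝ])
        + (Real.sin (2 * ε) * Real.cos t
            - 2 * Real.cos α * Real.sin ε ^ 2 * Real.sin t) • X
        + Real.sin t • Y + (0 : ℝ) • Z := by
  intro X Y Z
  have hX : NormedSpace.exp (ε • X) = ((Real.cos ε : ℝ) : ℍ[ℝ]) + Real.sin ε • X := by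
    apply exp_smul_unit
    · rfl
    · have h1 : Quaternion.normSq qi = 1 := by rw [Quaternion.normSq_def']; simp [qi]
      rw [Quaternion.normSq_eq_norm_mul_self] at h1
      nlinarith [norm_nonneg qi]
  have hY : NormedSpace.exp (t • Y) = ((Real.cos t : ℝ) : ℍ[ℝ]) + Real.sin t • Y := by
    apply exp_smul_unit
    · show (Real.cos α • qi + Real.sin α • qj).re = 0
      simp [Quaternion.re_smul]
    · have h1 : Quaternion.normSq (Real.cos α • qi + Real.sin α • qj : ℍ[ℝ]) = 1 := by
        simp [Quaternion.normSq_def', Quaternion.re_smul]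
        try nlinarith [Real.sin_sq_add_cos_sq α]
      rw [Quaternion.normSq_eq_norm_mul_self] at h1
      nlinarith [norm_nonneg (Real.cos α • qi + Real.sin α • qj : ℍ[ℝ])]
  rw [hX, hY, Real.cos_two_mul, Real.sin_two_mul]
  have hs := Real.sin_sq_add_cos_sq ε
  have ht := Real.sin_sq_add_cos_sq t
  ext <;>
    simp [X, Y, Z, Quaternion.ext_iff, ← Quaternion.coe_pow,
      Quaternion.re_mul, Quaternion.imI_mul, Quaternion.imJ_mul, Quaternion.imK_mul] <;>
    first
      | linear_combination (-Real.cos t) * hs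
      | linear_combination (Real.sin t * Real.cos α) * hs
      | linear_combination (Real.sin t * Real.sin α) * hs
      | ring
end
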